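/- Let p > 2, let A be a countable index set, and for each a ∈ A let X_a be a space of functions on a countable set B_a with norm given by a family {(P^{a,i}, W^{a,i}) : i ∈ I_a} of partitions and weights on B_a containing a distinguished indiscrete pair ({B_a}, W^{a,()}), and let W : A → (0,1]. On the disjoint union B = ⨆_{a∈A} B_a define, for each choice function σ = (i(a))_{a∈A} ∈ Π_{a∈A} I_a, the partition P_σ = {{a}×p : a ∈ A, p ∈ P^{a,i(a)}} with weight W_σ(a,b) = w^{a,i(a)}(b), and define the additional pair P_{()} = {B} with weight W_{()}(a,b) = W(a)·w^{a,()}(b). Then for every x = (x_{a,b}), the (p,2,W)-sum norm satisfies ‖x‖_{p,2,W} = sup of ‖x‖_{P_σ,W_σ} over σ ∈ Π_{a∈A} I_a together with ‖x‖_{P_{()},W_{()}}. In particular, the (p,2,W)-sum of spaces with norms given by partitions and weights has a norm given by partitions and weights. -/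

import Mathlib

open scoped ENNReal
open MeasureTheory Filter

noncomputable section

variable {α : Type*}

/-- `P` is a partition of the type `α`: a collection of pairwise disjoint
nonempty subsets of `α` whose union is all of `α`. -/
def IsPartition (P : Set (Set α)) : Prop :=
  (∀ N ∈ P, N.Nonempty) ∧ P.PairwiseDisjoint id ∧ ⋃₀ P = Set.univ

/-- A weight function takes values in `(0,1]`. -/
def IsWeight (W : α → ℝ) : Prop := ∀ a, W a ∈ Set.Ioc (0 : ℝ) 1

/-- `‖x‖_{P,W} = (Σ_{N∈P} (Σ_{j∈N} x_j² w_j²)^{p/2})^{1/p}`, valued in `[0,∞]`. -/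
def pwNorm (p : ℝ) (P : Set (Set α)) (W : α → ℝ) (x : α → ℝ) : ℝ≥0∞ :=
  (∑' N : P, (∑' j : N.1, ENNReal.ofReal ((x j.1) ^ 2 * (W j.1) ^ 2)) ^ (p / 2)) ^ (1 / p)

/-- A partition–weight pair on `α`. -/
abbrev PWPair (α : Type*) := Set (Set α) × (α → ℝ)

/-- Every member of the family is a genuine partition–weight pair. -/
def IsPWFamily (𝒞 : Set (PWPair α)) : Prop :=
  ∀ PW ∈ 𝒞, IsPartition PW.1 ∧ IsWeight PW.2

/-- `‖x‖_𝒞 = sup_{(P,W) ∈ 𝒞} ‖x‖_{P,W}`. -/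
def famNorm (p : ℝ) (𝒞 : Set (PWPair α)) (x : α → ℝ) : ℝ≥0∞ :=
  ⨆ PW ∈ 𝒞, pwNorm p PW.1 PW.2 x

section AuxLemmas

lemma myRpowIsup {ι : Type*} (c : ℝ) (hc : 0 < c) (f : ι → ℝ≥0∞) :
    (⨆ i, f i) ^ c = ⨆ i, f i ^ c := by
  cases isEmpty_or_nonempty ι
  · simp [iSup_of_empty, ENNReal.zero_rpow_of_pos hc]
  · exact (ENNReal.orderIsoRpow c hc).map_iSup f

lemma mySumIsup {A : Type*} {I : A → Type*} [∀ a, Nonempty (I a)]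
    (S : ∀ a, I a → ℝ≥0∞) :
    ∑' a, ⨆ i : I a, S a i = ⨆ σ : ∀ a, I a, ∑' a, S a (σ a) := by
  have key : ∀ a : A, (⨆ i : I a, S a i) = ⨆ σ : ∀ a, I a, S a (σ a) := by
    intro a
    exact ((Function.surjective_eval a).iSup_comp (S a)).symm
  calc ∑' a, ⨆ i : I a, S a i
      = ⨆ F : Finset A, ∑ a ∈ F, ⨆ σ : ∀ a, I a, S a (σ a) := by
        simp_rw [← key]; exact ENNReal.tsum_eq_iSup_sum
    _ = ⨆ F : Finset A, ⨆ σ : ∀ a, I a, ∑ a ∈ F, S a (σ a) := by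
        refine iSup_congr fun F => ?_
        refine ENNReal.finsetSum_iSup fun σ τ => ?_
        refine ⟨fun a => if S a (σ a) ≤ S a (τ a) then τ a else σ a, fun a => ?_⟩
        by_cases h : S a (σ a) ≤ S a (τ a) <;> simp [h, le_of_not_ge]
    _ = ⨆ σ : ∀ a, I a, ∑' a, S a (σ a) := by
        rw [iSup_comm]
        exact iSup_congr fun σ => ENNReal.tsum_eq_iSup_sum.symm

lemma mySigmaEquiv {A : Type*} {B : A → Type*} (P : ∀ a, Set (Set (B a)))
    (hne : ∀ a, ∀ s ∈ P a, s.Nonempty) :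
    ∃ e : (Σ a, P a) ≃ {S | ∃ a, ∃ s ∈ P a, S = Sigma.mk a '' s},
      ∀ q : Σ a, P a, (e q : Set (Σ a, B a)) = Sigma.mk q.1 '' q.2.1 := by
  refine ⟨Equiv.ofBijective
    (fun q => ⟨Sigma.mk q.1 '' q.2.1, ⟨q.1, q.2.1, q.2.2, rfl⟩⟩) ⟨?_, ?_⟩, fun q => rfl⟩
  · rintro ⟨a, s, hs⟩ ⟨a', s', hs'⟩ h
    simp only [Subtype.mk.injEq] at h
    obtain ⟨b, hb⟩ := hne a s hs
    have hmem : (⟨a, b⟩ : Σ a, B a) ∈ Sigma.mk a' '' s' := h ▸ ⟨b, hb, rfl⟩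
    obtain ⟨b', hb', hbeq⟩ := hmem
    obtain rfl : a' = a := congrArg Sigma.fst hbeq
    have hss : s = s' := Set.image_injective.2 sigma_mk_injective h
    subst hss
    rfl
  · rintro ⟨S, a, s, hs, rfl⟩
    exact ⟨⟨a, s, hs⟩, rfl⟩

lemma mySigmaPwNorm {A : Type*} {B : A → Type*} (p : ℝ)
    (P : ∀ a, Set (Set (B a))) (w : ∀ a, B a → ℝ)
    (hne : ∀ a, ∀ s ∈ P a, s.Nonempty) (x : (Σ a, B a) → ℝ) :
    pwNorm p {S | ∃ a, ∃ s ∈ P a, S = Sigma.mk a '' s} (fun j => w j.1 j.2) x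
      = (∑' a, ∑' s : P a,
          (∑' b : s.1, ENNReal.ofReal ((x ⟨a, b.1⟩) ^ 2 * (w a b.1) ^ 2)) ^ (p / 2)) ^ (1 / p) := by
  obtain ⟨e, he⟩ := mySigmaEquiv P hne
  unfold pwNorm
  congr 1
  set f : Set (Σ a, B a) → ℝ≥0∞ := fun N =>
    (∑' j : N, ENNReal.ofReal ((x j.1) ^ 2 * (w j.1.1 j.1.2) ^ 2)) ^ (p / 2) with hf
  have step1 : (∑' N : {S | ∃ a, ∃ s ∈ P a, S = Sigma.mk a '' s}, f N.1)
      = ∑' q : Σ a, P a, f (e q).1 := (e.tsum_eq (fun N => f N.1)).symm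
  have step2 : (∑' q : Σ a, P a, f (e q).1) = ∑' a, ∑' s : P a, f (e ⟨a, s⟩).1 :=
    ENNReal.tsum_sigma' (fun q => f (e q).1)
  rw [step1, step2]
  refine tsum_congr fun a => tsum_congr fun s => ?_
  rw [he ⟨a, s⟩]
  show (∑' j : (Sigma.mk a '' s.1 : Set (Σ a, B a)),
      ENNReal.ofReal ((x j.1) ^ 2 * (w j.1.1 j.1.2) ^ 2)) ^ (p / 2) = _
  congr 1
  rw [← (Equiv.Set.image (Sigma.mk a) s.1 sigma_mk_injective).tsum_eq]
  rfl

end AuxLemmas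

/-- The `(p,2,W)`-sum of spaces with norms given by partitions and
weights has norm given by partitions and weights: for every `x` on the disjoint union
`Σ a, B a`, the `(p,2,W)`-sum norm equals the supremum of `‖x‖_{P_σ,W_σ}` over all
choice functions `σ`, together with `‖x‖_{P_(),W_()}`.  In particular there is a family
`𝒬` of partition–weight pairs on `Σ a, B a` computing this norm. -/
theorem statement2 {A : Type*} [Countable A] {B : A → Type*} [∀ a, Countable (B a)]
    {I : A → Type*} (p : ℝ) (hp : 2 < p)
    (PP : ∀ a, I a → Set (Set (B a))) (WW : ∀ a, I a → B a → ℝ)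
    (hPart : ∀ a i, IsPartition (PP a i)) (hWt : ∀ a i, IsWeight (WW a i))
    (i0 : ∀ a, I a) (hind : ∀ a, PP a (i0 a) = {Set.univ})
    (W : A → ℝ) (hW : IsWeight W) :
    (∀ x : (Σ a, B a) → ℝ,
      max ((∑' a, (⨆ i : I a, pwNorm p (PP a i) (WW a i) (fun b => x ⟨a, b⟩)) ^ p) ^ (1 / p))
          ((∑' a, ENNReal.ofReal ((W a) ^ 2) *
              ∑' b, ENNReal.ofReal ((x ⟨a, b⟩) ^ 2 * (WW a (i0 a) b) ^ 2)) ^ ((1 : ℝ) / 2))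
        = (⨆ σ : ∀ a, I a,
            pwNorm p {S | ∃ a, ∃ s ∈ PP a (σ a), S = Sigma.mk a '' s}
              (fun j => WW j.1 (σ j.1) j.2) x) ⊔
          pwNorm p {Set.univ} (fun j => W j.1 * WW j.1 (i0 j.1) j.2) x) ∧
    (∃ 𝒬 : Set (PWPair (Σ a, B a)), IsPWFamily 𝒬 ∧
      ∀ x : (Σ a, B a) → ℝ,
        max ((∑' a, (⨆ i : I a, pwNorm p (PP a i) (WW a i) (fun b => x ⟨a, b⟩)) ^ p) ^ (1 / p))
            ((∑' a, ENNReal.ofReal ((W a) ^ 2) *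
                ∑' b, ENNReal.ofReal ((x ⟨a, b⟩) ^ 2 * (WW a (i0 a) b) ^ 2)) ^ ((1 : ℝ) / 2))
          = famNorm p 𝒬 x) := by
  classical
  have hp0 : 0 < p := lt_trans two_pos hp
  have hp0' : p ≠ 0 := hp0.ne'
  haveI hIne : ∀ a, Nonempty (I a) := fun a => ⟨i0 a⟩
  have hBne : ∀ a, Nonempty (B a) := by
    intro a
    have h1 := (hPart a (i0 a)).1
    rw [hind a] at h1
    exact Set.nonempty_iff_univ_nonempty.2 (h1 Set.univ rfl)
  have hhalf : p / 2 * (1 / p) = 1 / 2 := by field_simp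
  have hPartσ : ∀ σ : ∀ a, I a,
      IsPartition {S | ∃ a, ∃ s ∈ PP a (σ a), S = Sigma.mk a '' s} := by
    intro σ
    refine ⟨?_, ?_, ?_⟩
    · rintro N ⟨a, s, hs, rfl⟩
      exact ((hPart a (σ a)).1 s hs).image _
    · rintro N₁ ⟨a, s, hs, rfl⟩ N₂ ⟨a', s', hs', rfl⟩ hne12
      rcases eq_or_ne a a' with rfl | haa
      · have hss : s ≠ s' := fun h => hne12 (by rw [h])
        have hdisj : Disjoint s s' := (hPart a (σ a)).2.1 hs hs' hss
        show Disjoint (Sigma.mk a '' s) (Sigma.mk a '' s')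
        rw [Set.disjoint_left]
        rintro z ⟨b, hb, rfl⟩ ⟨b', hb', hbeq⟩
        obtain rfl : b' = b := sigma_mk_injective hbeq
        exact Set.disjoint_left.1 hdisj hb hb'
      · show Disjoint (Sigma.mk a '' s) (Sigma.mk a' '' s')
        rw [Set.disjoint_left]
        rintro z ⟨b, hb, rfl⟩ ⟨b', hb', hbeq⟩
        exact haa (congrArg Sigma.fst hbeq).symm
    · rw [Set.eq_univ_iff_forall]
      rintro ⟨a, b⟩
      have hb : b ∈ ⋃₀ PP a (σ a) := by rw [(hPart a (σ a)).2.2]; trivial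
      obtain ⟨s, hs, hbs⟩ := hb
      exact Set.mem_sUnion.2 ⟨Sigma.mk a '' s, ⟨a, s, hs, rfl⟩, ⟨b, hbs, rfl⟩⟩
  have key : ∀ x : (Σ a, B a) → ℝ,
      max ((∑' a, (⨆ i : I a, pwNorm p (PP a i) (WW a i) (fun b => x ⟨a, b⟩)) ^ p) ^ (1 / p))
          ((∑' a, ENNReal.ofReal ((W a) ^ 2) *
              ∑' b, ENNReal.ofReal ((x ⟨a, b⟩) ^ 2 * (WW a (i0 a) b) ^ 2)) ^ ((1 : ℝ) / 2))
        = (⨆ σ : ∀ a, I a,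
            pwNorm p {S | ∃ a, ∃ s ∈ PP a (σ a), S = Sigma.mk a '' s}
              (fun j => WW j.1 (σ j.1) j.2) x) ⊔
          pwNorm p {Set.univ} (fun j => W j.1 * WW j.1 (i0 j.1) j.2) x := by
    intro x
    set S : ∀ a, I a → ℝ≥0∞ := fun a i => ∑' s : PP a i,
      (∑' b : s.1, ENNReal.ofReal ((x ⟨a, b.1⟩) ^ 2 * (WW a i b.1) ^ 2)) ^ (p / 2) with hS
    have hpw : ∀ a i, pwNorm p (PP a i) (WW a i) (fun b => x ⟨a, b⟩) = S a i ^ (1 / p) :=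
      fun a i => rfl
    have hsup : ∀ a, (⨆ i, pwNorm p (PP a i) (WW a i) (fun b => x ⟨a, b⟩)) ^ p
        = ⨆ i, S a i := by
      intro a
      rw [myRpowIsup p hp0]
      refine iSup_congr fun i => ?_
      rw [hpw, ← ENNReal.rpow_mul, one_div, inv_mul_cancel₀ hp0', ENNReal.rpow_one]
    have first : (∑' a, (⨆ i : I a,
        pwNorm p (PP a i) (WW a i) (fun b => x ⟨a, b⟩)) ^ p) ^ (1 / p)
        = ⨆ σ : ∀ a, I a,
            pwNorm p {S | ∃ a, ∃ s ∈ PP a (σ a), S = Sigma.mk a '' s}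
              (fun j => WW j.1 (σ j.1) j.2) x := by
      calc (∑' a, (⨆ i : I a, pwNorm p (PP a i) (WW a i) (fun b => x ⟨a, b⟩)) ^ p) ^ (1 / p)
          = (∑' a, ⨆ i, S a i) ^ (1 / p) := by
            congr 1; exact tsum_congr hsup
        _ = (⨆ σ : ∀ a, I a, ∑' a, S a (σ a)) ^ (1 / p) := by rw [mySumIsup]
        _ = ⨆ σ : ∀ a, I a, (∑' a, S a (σ a)) ^ (1 / p) :=
            myRpowIsup _ (by positivity) _
        _ = ⨆ σ : ∀ a, I a,
            pwNorm p {S | ∃ a, ∃ s ∈ PP a (σ a), S = Sigma.mk a '' s}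
              (fun j => WW j.1 (σ j.1) j.2) x :=
            iSup_congr fun σ => (mySigmaPwNorm p (fun a => PP a (σ a))
              (fun a => WW a (σ a)) (fun a => (hPart a (σ a)).1) x).symm
    have h2 : pwNorm p {Set.univ} (fun j : Σ a, B a => W j.1 * WW j.1 (i0 j.1) j.2) x
        = ((∑' j : (Σ a, B a),
            ENNReal.ofReal ((x j) ^ 2 * (W j.1 * WW j.1 (i0 j.1) j.2) ^ 2)) ^ (p / 2)) ^ (1 / p) := by
      unfold pwNorm
      rw [tsum_singleton (Set.univ : Set (Σ a, B a)) (fun N : Set (Σ a, B a) =>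
        (∑' j : N, ENNReal.ofReal ((x j.1) ^ 2 * (W j.1.1 * WW j.1.1 (i0 j.1.1) j.1.2) ^ 2))
          ^ (p / 2))]
      congr 2
      rw [tsum_univ (fun j : Σ a, B a =>
        ENNReal.ofReal ((x j) ^ 2 * (W j.1 * WW j.1 (i0 j.1) j.2) ^ 2))]
    have second : (∑' a, ENNReal.ofReal ((W a) ^ 2) *
        ∑' b, ENNReal.ofReal ((x ⟨a, b⟩) ^ 2 * (WW a (i0 a) b) ^ 2)) ^ ((1 : ℝ) / 2)
        = pwNorm p {Set.univ} (fun j : Σ a, B a => W j.1 * WW j.1 (i0 j.1) j.2) x := by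
      rw [h2, ← ENNReal.rpow_mul, hhalf]
      congr 1
      rw [ENNReal.tsum_sigma' (fun j : Σ a, B a =>
        ENNReal.ofReal ((x j) ^ 2 * (W j.1 * WW j.1 (i0 j.1) j.2) ^ 2))]
      refine tsum_congr fun a => ?_
      rw [← ENNReal.tsum_mul_left]
      refine tsum_congr fun b => ?_
      rw [← ENNReal.ofReal_mul (sq_nonneg (W a))]
      congr 1
      ring
    rw [first, second]
  refine ⟨key, ?_⟩
  rcases isEmpty_or_nonempty A with hA | hA
  · haveI : IsEmpty (Σ a, B a) := ⟨fun j => IsEmpty.elim hA j.1⟩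
    refine ⟨Set.range (fun σ : ∀ a, I a =>
      (({S | ∃ a, ∃ s ∈ PP a (σ a), S = Sigma.mk a '' s},
        fun j : Σ a, B a => WW j.1 (σ j.1) j.2) : PWPair (Σ a, B a))), ?_, ?_⟩
    · rintro PW ⟨σ, rfl⟩
      exact ⟨hPartσ σ, fun j => hWt j.1 (σ j.1) j.2⟩
    · intro x
      rw [key x]
      have hzero : pwNorm p {Set.univ} (fun j : Σ a, B a => W j.1 * WW j.1 (i0 j.1) j.2) x
          = 0 := by
        unfold pwNorm
        rw [tsum_singleton (Set.univ : Set (Σ a, B a)) (fun N : Set (Σ a, B a) =>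
          (∑' j : N, ENNReal.ofReal ((x j.1) ^ 2 * (W j.1.1 * WW j.1.1 (i0 j.1.1) j.1.2) ^ 2))
            ^ (p / 2)), tsum_empty, ENNReal.zero_rpow_of_pos (by positivity),
          ENNReal.zero_rpow_of_pos (by positivity)]
      rw [hzero]
      unfold famNorm
      rw [iSup_range]
      exact sup_eq_left.2 zero_le
  · haveI : Nonempty (Σ a, B a) := by
      obtain ⟨a⟩ := hA
      obtain ⟨b⟩ := hBne a
      exact ⟨⟨a, b⟩⟩
    refine ⟨Set.range (fun σ : ∀ a, I a =>
      (({S | ∃ a, ∃ s ∈ PP a (σ a), S = Sigma.mk a '' s},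
        fun j : Σ a, B a => WW j.1 (σ j.1) j.2) : PWPair (Σ a, B a))) ∪
      {({Set.univ}, fun j : Σ a, B a => W j.1 * WW j.1 (i0 j.1) j.2)}, ?_, ?_⟩
    · rintro PW (⟨σ, rfl⟩ | hPW)
      · exact ⟨hPartσ σ, fun j => hWt j.1 (σ j.1) j.2⟩
      · rw [Set.mem_singleton_iff] at hPW
        subst hPW
        refine ⟨⟨?_, ?_, ?_⟩, ?_⟩
        · rintro N hN
          rw [Set.mem_singleton_iff] at hN
          subst hN
          exact Set.univ_nonempty
        · exact Set.pairwiseDisjoint_singleton _ _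
        · simp
        · intro j
          have h1 := hW j.1
          have h2 := hWt j.1 (i0 j.1) j.2
          constructor
          · exact mul_pos h1.1 h2.1
          · show W j.1 * WW j.1 (i0 j.1) j.2 ≤ 1
            nlinarith [h1.1, h1.2, h2.1, h2.2]
    · intro x
      rw [key x]
      unfold famNorm
      rw [iSup_union, iSup_range, iSup_singleton]
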